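/- (The induced Higgs field transforms correctly.) Let ω^L be an H-invariant connection on the H-equivariant principal L-bundle T → R where R is a principal K-bundle over M. For t ∈ T and κ ∈ k, define Φ(t)(κ) ∈ h by the condition that the fundamental vector field ι^H_t(Φ(t)(κ)) equals the ω^L-horizontal lift of the fundamental vector field ι^K_{π(t)}(κ). Then Φ(t) is a right splitting, β(Φ(t)(κ)) = κ, and Φ satisfies the Higgs field equivariance Φ(th) = Ad(h⁻¹) ∘ Φ(t) ∘ Ad(β(h)) for all h ∈ H. -/
import Mathlib


/-- The Higgs field induced by an `H`-invariant connection `ω^L` on the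
`H`-equivariant `L`-bundle `T → R` — defined by `ι^H_t(Φ(t)(κ)) = ` the `ω^L`-horizontal
lift of `ι^K_{π(t)}(κ)`, i.e. `Φ(t)(κ)` is `ω^L`-horizontal and `β(Φ(t)(κ)) = κ` —
is a right splitting and transforms as `Φ(th) = Ad(h⁻¹) ∘ Φ(t) ∘ Ad(β(h))`. -/
theorem induced_higgs_field_equivariance
    {H K hV kV T : Type*} [Group H] [Group K]
    [AddCommGroup hV] [Module ℝ hV] [AddCommGroup kV] [Module ℝ kV]
    {V : Type*} [AddCommGroup V] [Module ℝ V]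
    (βG : H →* K) (hβGsurj : Function.Surjective βG)
    (β : hV →ₗ[ℝ] kV) (hβsurj : Function.Surjective β)
    (Ad : H →* (hV ≃ₗ[ℝ] hV)) (AdK : K →* (kV ≃ₗ[ℝ] kV))
    (hequiv : ∀ h : H, β ∘ₗ (Ad h).toLinearMap = (AdK (βG h)).toLinearMap ∘ₗ β)
    -- `T` with free right `H`-action extending the `L`-action
    (act : T → H → T)
    (hact_one : ∀ t, act t 1 = t)
    (hact_mul : ∀ t h₁ h₂, act (act t h₁) h₂ = act t (h₁ * h₂))
    (hfree : ∀ t h, act t h = t → h = 1)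
    (D : H → T → (V →ₗ[ℝ] V))
    (hD1 : ∀ t, D 1 t = LinearMap.id)
    (hDmul : ∀ h₁ h₂ t, D (h₁ * h₂) t = D h₂ (act t h₁) ∘ₗ D h₁ t)
    (ι : T → (hV →ₗ[ℝ] V))
    (hιequiv : ∀ (h : H) (t : T) (η : hV),
      D h t (ι t η) = ι (act t h) (Ad h⁻¹ η))
    -- `ω^L`: `H`-invariant connection on `T → R`
    (ωL : T → (V →ₗ[ℝ] hV))
    (hωLval : ∀ t v, ωL t v ∈ LinearMap.ker β)
    (hωLfund : ∀ t, ∀ lam ∈ LinearMap.ker β, ωL t (ι t lam) = lam)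
    (hωLequiv : ∀ (h : H) (t : T),
      ωL (act t h) ∘ₗ D h t = (Ad h⁻¹).toLinearMap ∘ₗ ωL t)
    -- uniqueness of horizontal lifts (from freeness of the actions)
    (huniq : ∀ (t : T) (η η' : hV), ωL t (ι t η) = 0 → ωL t (ι t η') = 0 →
      β η = β η' → η = η')
    -- `Φ` defined by the horizontal-lift condition
    (Φ : T → (kV →ₗ[ℝ] hV))
    (hΦhoriz : ∀ (t : T) (κ : kV), ωL t (ι t (Φ t κ)) = 0)
    (hΦproj : ∀ (t : T) (κ : kV), β (Φ t κ) = κ) :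
    (∀ t, β ∘ₗ Φ t = LinearMap.id) ∧
    (∀ (t : T) (h : H), Φ (act t h)
      = (Ad h⁻¹).toLinearMap ∘ₗ Φ t ∘ₗ (AdK (βG h)).toLinearMap) := by
  constructor
  · intro t
    ext κ
    simp [hΦproj]
  · intro t h
    ext κ
    apply huniq (act t h)
    · exact hΦhoriz _ _
    · simp only [LinearMap.coe_comp, Function.comp_apply, LinearEquiv.coe_coe]
      rw [← hιequiv h t (Φ t (AdK (βG h) κ))]
      have := LinearMap.congr_fun (hωLequiv h t) (ι t (Φ t (AdK (βG h) κ)))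
      simp only [LinearMap.coe_comp, Function.comp_apply, LinearEquiv.coe_coe] at this
      rw [this, hΦhoriz, map_zero]
    · have hβAd : ∀ (h' : H) (η : hV), β (Ad h' η) = AdK (βG h') (β η) := by
        intro h' η
        exact LinearMap.congr_fun (hequiv h') η
      simp only [LinearMap.coe_comp, Function.comp_apply, LinearEquiv.coe_coe]
      rw [hΦproj, hβAd, hΦproj]
      rw [map_inv, map_inv]
      exact ((AdK (βG h)).symm_apply_apply κ).symm
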